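/- Let E/K be a field extension with a derivation ∂ of E preserving K, and let D¹ be the induced Lie derivative on Ω(E/K). Suppose a, b ∈ E with b ≠ 0 and ∂(a) = ∂(b)/b. Then the differential form ω = da − db/b ∈ Ω(E/K) satisfies D¹(ω) = 0. -/
import Mathlib


/-- (Claim 3 / Lemma 3 of Ax) With `D¹` the Lie derivative on `Ω[E⁄K]`
induced by a derivation `δ` of `E` preserving `K`, if `a, b ∈ E`, `b ≠ 0` and
`δ(a) = δ(b)/b`, then `ω = da − db/b` satisfies `D¹(ω) = 0`. -/
theorem lie_derivative_kills_ax_form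
    (K : Type*) [Field K] (E : Type*) [Field E] [Algebra K E]
    (δ : E → E)
    (hδadd : ∀ x y : E, δ (x + y) = δ x + δ y)
    (hδmul : ∀ x y : E, δ (x * y) = x * δ y + δ x * y)
    (hK : ∀ a : K, ∃ b : K, δ (algebraMap K E a) = algebraMap K E b)
    (D1 : Ω[E⁄K] → Ω[E⁄K])
    (hD1add : ∀ ω η : Ω[E⁄K], D1 (ω + η) = D1 ω + D1 η)
    (hD1d : ∀ f : E, D1 (KaehlerDifferential.D K E f) = KaehlerDifferential.D K E (δ f))
    (hD1smul : ∀ (f : E) (ω : Ω[E⁄K]), D1 (f • ω) = δ f • ω + f • D1 ω)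
    (a b : E) (hb : b ≠ 0) (hab : δ a = δ b / b) :
    D1 (KaehlerDifferential.D K E a - b⁻¹ • KaehlerDifferential.D K E b) = 0 := by
  set d := KaehlerDifferential.D K E with hd
  -- δ 1 = 0
  have hδ1 : δ 1 = 0 := by
    have := hδmul 1 1
    simp at this
    exact this
  -- δ b⁻¹
  have hδinv : δ b⁻¹ = -(δ b * b⁻¹ * b⁻¹) := by
    have h := hδmul b b⁻¹
    rw [mul_inv_cancel₀ hb, hδ1] at h
    have hb' : b⁻¹ * b = 1 := inv_mul_cancel₀ hb
    linear_combination -b⁻¹ * h - δ b⁻¹ * hb'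
  -- D1 0 = 0 and D1 (-ω) = - D1 ω
  have hD10 : D1 0 = 0 := by
    have := hD1add 0 0
    simp at this
    exact this
  have hD1neg : ∀ ω : Ω[E⁄K], D1 (-ω) = -D1 ω := by
    intro ω
    have := hD1add ω (-ω)
    rw [add_neg_cancel, hD10] at this
    exact eq_neg_of_add_eq_zero_right this.symm
  rw [sub_eq_add_neg, hD1add, hD1neg, hD1smul, hD1d, hD1d, hab, hδinv]
  rw [div_eq_mul_inv, Derivation.leibniz, Derivation.leibniz_inv]
  simp only [smul_smul, smul_neg, neg_smul, pow_two]
  module
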